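/- arXiv:2512.05164 — 2 statements merged into one kernel-verified Lean document; each statement's English description precedes it below -/
import Mathlib

section
/- Let c > 0, let V be a real number with |V| > c, let η ∈ {−1, 1}, and let γ̃ := 1/√(V²/c² − 1). For any (t, x) ∈ ℝ², define x' := η·γ̃·(x − V·t) and t' := η·γ̃·(t − (V/c²)·x). Then x'² − c²·t'² = −(x² − c²·t²), i.e. the superluminal map reverses the sign of the Minkowski quadratic form (it is an anti-isometry in 1+1 dimensions). -/
/-- The superluminal branch of the Lorentz-type maps in 1+1 dimensions
reverses the sign of the Minkowski quadratic form (it is an anti-isometry). -/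
theorem superluminal_anti_isometry
    (c V η : ℝ) (hc : 0 < c) (hV : |V| > c) (hη : η = 1 ∨ η = -1)
    (γ : ℝ) (hγ : γ = 1 / Real.sqrt (V ^ 2 / c ^ 2 - 1))
    (t x t' x' : ℝ)
    (hx' : x' = η * γ * (x - V * t))
    (ht' : t' = η * γ * (t - (V / c ^ 2) * x)) :
    x' ^ 2 - c ^ 2 * t' ^ 2 = -(x ^ 2 - c ^ 2 * t ^ 2) := by
  have hc2 : (0:ℝ) < c ^ 2 := by positivity
  have hs : 0 < V ^ 2 / c ^ 2 - 1 := by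
    have h1 : c ^ 2 < V ^ 2 := by
      have := sq_abs V; nlinarith [abs_nonneg V]
    have : 1 < V ^ 2 / c ^ 2 := (one_lt_div hc2).2 h1
    linarith
  have hsq : Real.sqrt (V ^ 2 / c ^ 2 - 1) ^ 2 = V ^ 2 / c ^ 2 - 1 :=
    Real.sq_sqrt hs.le
  have hsne : Real.sqrt (V ^ 2 / c ^ 2 - 1) ≠ 0 := by
    positivity
  have hη2 : η ^ 2 = 1 := by rcases hη with h | h <;> simp [h]
  have hvc : V ^ 2 - c ^ 2 ≠ 0 := by
    have : c ^ 2 < V ^ 2 := by nlinarith [sq_abs V, abs_nonneg V]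
    linarith
  have hγ2 : γ ^ 2 * (V ^ 2 - c ^ 2) = c ^ 2 := by
    rw [hγ, div_pow, one_pow, hsq]
    field_simp
  subst hx' ht'
  have hc0 : c ≠ 0 := hc.ne'
  field_simp
  linear_combination (γ ^ 2 * ((x - V * t) ^ 2 * c ^ 2 - (t * c ^ 2 - x * V) ^ 2)) * hη2
    + (t ^ 2 * c ^ 2 - x ^ 2) * hγ2
end

section
/- Let c > 0, let V be a real number with |V| > c, let η ∈ {−1, 1}, let γ̃ := 1/√(V²/c² − 1), and for (t, x) ∈ ℝ² set x' := η·γ̃·(x − V·t) and t' := η·γ̃·(t − (V/c²)·x). Then: (i) x² − c²·t² < 0 if and only if x'² − c²·t'² > 0 (timelike separations are mapped to spacelike ones and vice versa); and (ii) x² = c²·t² if and only if x'² = c²·t'² (null separations are mapped to null separations, so the null cone is preserved as a set). -/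
/-- The superluminal map exchanges timelike and spacelike separations
and preserves the null cone as a set. -/
theorem superluminal_exchanges_timelike_spacelike_and_preserves_null
    (c V η : ℝ) (hc : 0 < c) (hV : |V| > c) (hη : η = 1 ∨ η = -1)
    (γ : ℝ) (hγ : γ = 1 / Real.sqrt (V ^ 2 / c ^ 2 - 1))
    (t x t' x' : ℝ)
    (hx' : x' = η * γ * (x - V * t))
    (ht' : t' = η * γ * (t - (V / c ^ 2) * x)) :
    (x ^ 2 - c ^ 2 * t ^ 2 < 0 ↔ x' ^ 2 - c ^ 2 * t' ^ 2 > 0) ∧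
    (x ^ 2 = c ^ 2 * t ^ 2 ↔ x' ^ 2 = c ^ 2 * t' ^ 2) := by
  have hc2 : (0:ℝ) < c ^ 2 := by positivity
  have hV2 : c ^ 2 < V ^ 2 := by
    have := sq_abs V
    nlinarith [abs_nonneg V, hc.le]
  have hpos : (0:ℝ) < V ^ 2 / c ^ 2 - 1 := by
    rw [sub_pos, lt_div_iff₀ hc2]; linarith
  have hγ2 : γ ^ 2 = 1 / (V ^ 2 / c ^ 2 - 1) := by
    rw [hγ, div_pow, one_pow, Real.sq_sqrt hpos.le]
  have hη2 : η ^ 2 = 1 := by rcases hη with h | h <;> simp [h]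
  have key : x' ^ 2 - c ^ 2 * t' ^ 2 = -(x ^ 2 - c ^ 2 * t ^ 2) := by
    have h1 : γ ^ 2 * (V ^ 2 / c ^ 2 - 1) = 1 := by
      rw [hγ2, one_div_mul_cancel hpos.ne']
    rw [hx', ht']
    field_simp at h1 ⊢
    linear_combination (-(x^2 - c^2*t^2)*η^2) * h1 + (-(x^2 - c^2*t^2)*c^2) * hη2
  constructor
  · constructor <;> intro h <;> linarith [key]
  · constructor <;> intro h <;> nlinarith [key]
end
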